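/- Let L = F_{2^l}, q = 2^k with gcd(k,l) = 1, and let P_b(x) = x^{q+1} + x + b for b ∈ L. Then P_b has exactly two roots in L if and only if b = 0. -/

import Mathlib

theorem coprime_pow_sub_one (k l : ℕ) (hgcd : Nat.gcd k l = 1) :
    Nat.Coprime (2 ^ k - 1) (2 ^ l - 1) := by
  set d := Nat.gcd (2 ^ k - 1) (2 ^ l - 1) with hd
  show d = 1
  have hdk : d ∣ 2 ^ k - 1 := Nat.gcd_dvd_left _ _
  have hdl : d ∣ 2 ^ l - 1 := Nat.gcd_dvd_right _ _
  have h1k : (1:ℕ) ≤ 2 ^ k := Nat.one_le_two_pow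
  have h1l : (1:ℕ) ≤ 2 ^ l := Nat.one_le_two_pow
  have key : ∀ m : ℕ, 1 ≤ 2 ^ m → d ∣ 2 ^ m - 1 → (2 : ZMod d) ^ m = 1 := by
    intro m h1 hdvd
    have h0 : ((2 ^ m - 1 : ℕ) : ZMod d) = 0 := (ZMod.natCast_eq_zero_iff _ d).mpr hdvd
    rw [Nat.cast_sub h1] at h0
    push_cast at h0
    rw [sub_eq_zero] at h0
    exact h0
  have hodk : orderOf (2 : ZMod d) ∣ k := orderOf_dvd_of_pow_eq_one (key k h1k hdk)
  have hodl : orderOf (2 : ZMod d) ∣ l := orderOf_dvd_of_pow_eq_one (key l h1l hdl)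
  have hod1 : orderOf (2 : ZMod d) ∣ 1 := by have := Nat.dvd_gcd hodk hodl; rwa [hgcd] at this
  have h21 : (2 : ZMod d) = 1 := orderOf_eq_one_iff.mp (Nat.dvd_one.mp hod1)
  have h10 : ((1 : ℕ) : ZMod d) = 0 := by
    have : ((2 : ℕ) : ZMod d) - 1 = 0 := by push_cast; rw [h21]; ring
    push_cast at this ⊢
    linear_combination this
  exact Nat.dvd_one.mp ((ZMod.natCast_eq_zero_iff 1 d).mp h10)

/-- Let L = F_{2^l}, q = 2^k with gcd(k,l) = 1, and P_b(x) = x^{q+1} + x + b.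
Then P_b has exactly two roots in L iff b = 0. -/
theorem two_roots_iff_b_zero (k l : ℕ) (hk : 0 < k) (hl : 0 < l)
    (hgcd : Nat.gcd k l = 1)
    (L : Type) [Field L] [Fintype L] [DecidableEq L] (hcard : Fintype.card L = 2 ^ l)
    (b : L) :
    (Finset.univ.filter fun x : L => x ^ (2 ^ k + 1) + x + b = 0).card = 2 ↔ b = 0 := by
  haveI hfact2 : Fact (Nat.Prime 2) := ⟨Nat.prime_two⟩
  have hchar2 : CharP L 2 := by
    haveI hcp : CharP L (ringChar L) := ringChar.charP L
    obtain ⟨n, hp, hcardp⟩ := FiniteField.card L (ringChar L)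
    have hdvd : ringChar L ∣ 2 ^ l := by
      rw [← hcard, hcardp]
      exact dvd_pow_self _ (by positivity)
    have h2 : ringChar L = 2 :=
      (Nat.prime_dvd_prime_iff_eq hp Nat.prime_two).mp (hp.dvd_of_dvd_pow hdvd)
    rwa [h2] at hcp
  haveI := hchar2
  have htwo : (2 : L) = 0 := CharTwo.two_eq_zero
  set q : ℕ := 2 ^ k with hq
  have hq1 : 1 ≤ q := Nat.one_le_two_pow
  have hqne : q ≠ 0 := by positivity
  have hfrob : ∀ x y : L, (x + y) ^ q = x ^ q + y ^ q := fun x y => add_pow_char_pow ..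
  constructor
  · -- card = 2 → b = 0
    intro hcard2
    by_contra hb
    obtain ⟨x1, hx1m, x2, hx2m, hne⟩ :=
      Finset.one_lt_card.mp (by rw [hcard2]; norm_num)
    rw [Finset.mem_filter] at hx1m hx2m
    have h1 : x1 ^ q * x1 + x1 + b = 0 := by
      have := hx1m.2; rwa [pow_succ] at this
    have h2 : x2 ^ q * x2 + x2 + b = 0 := by
      have := hx2m.2; rwa [pow_succ] at this
    set s : L := x1 + x2 with hs
    have hs0 : s ≠ 0 := by
      intro h
      apply hne
      have : x1 = -x2 := by linear_combination h
      rw [this, CharTwo.neg_eq]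
    have hx1ne0 : x1 ≠ 0 := by
      intro h; apply hb
      rw [h] at h1; simpa [zero_pow hqne] using h1
    have hc0 : x1 ^ q + 1 ≠ 0 := by
      intro h
      have hxq1 : x1 ^ q = 1 := by linear_combination h - htwo
      apply hb
      rw [hxq1] at h1
      linear_combination h1 - x1 * htwo
    -- identity (i)
    have hi : s ^ q * s + x1 * s ^ q + (x1 ^ q + 1) * s = 0 := by
      rw [hs, hfrob]
      linear_combination h1 + h2 + (x1 ^ q * x1 + x1 ^ q * x2 + x2 ^ q * x1 - b) * htwo
    -- kernel element v0
    set d : L := x1 * (x1 ^ q + 1)⁻¹ with hd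
    have hd0 : d ≠ 0 := mul_ne_zero hx1ne0 (inv_ne_zero hc0)
    have hcop : Nat.Coprime (Nat.card Lˣ) (2 ^ k - 1) := by
      rw [Nat.card_eq_fintype_card, Fintype.card_units, hcard]
      exact (coprime_pow_sub_one k l hgcd).symm
    obtain ⟨v0U, hv0U⟩ := (powCoprime hcop).surjective (Units.mk0 d hd0)
    set v0 : L := (v0U : L) with hv0def
    have hv00 : v0 ≠ 0 := v0U.ne_zero
    have hv0 : v0 ^ (q - 1) = d := by
      rw [powCoprime_apply] at hv0U
      have := congrArg (Units.val) hv0U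
      rwa [Units.val_pow_eq_pow_val, Units.val_mk0] at this
    have hv0q : v0 ^ q = d * v0 := by
      conv_lhs => rw [show q = (q - 1) + 1 from (Nat.sub_add_cancel hq1).symm]
      rw [pow_succ, hv0]
    have hA0 : (x1 ^ q + 1) * v0 ^ q = x1 * v0 := by
      rw [hv0q, hd]
      field_simp
    -- v1 = s⁻¹ satisfies A(v1) = 1
    have hsq0 : s ^ q ≠ 0 := pow_ne_zero _ hs0
    have hA1 : (x1 ^ q + 1) * (s⁻¹) ^ q + x1 * s⁻¹ = 1 := by
      rw [inv_pow]
      field_simp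
      linear_combination hi - s ^ q * s * htwo
    set v2 : L := s⁻¹ + v0 with hv2def
    have hv2q : v2 ^ q = (s⁻¹) ^ q + v0 ^ q := by rw [hv2def, hfrob]
    have hA2 : (x1 ^ q + 1) * v2 ^ q + x1 * v2 = 1 := by
      rw [hv2q, hv2def]
      linear_combination hA1 + hA0 + x1 * v0 * htwo
    have hv20 : v2 ≠ 0 := by
      intro h
      rw [h, zero_pow hqne, mul_zero, mul_zero, add_zero] at hA2
      exact zero_ne_one hA2
    have huv : v2 * v2⁻¹ = 1 := mul_inv_cancel₀ hv20
    have huvq : v2 ^ q * (v2⁻¹) ^ q = 1 := by rw [← mul_pow, huv, one_pow]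
    set x3 : L := x1 + v2⁻¹ with hx3def
    have hu0 : v2⁻¹ ≠ 0 := inv_ne_zero hv20
    have hx3 : x3 ^ (q + 1) + x3 + b = 0 := by
      rw [pow_succ, hx3def, hfrob]
      linear_combination h1 + ((v2⁻¹) ^ q * v2⁻¹) * hA2 - x1 * (v2⁻¹) ^ q * huv
        - (x1 ^ q + 1) * v2⁻¹ * huvq + (v2⁻¹) ^ q * v2⁻¹ * htwo
    have hx3ne1 : x3 ≠ x1 := by
      intro h
      apply hu0
      linear_combination h - hx3def
    have hx3ne2 : x3 ≠ x2 := by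
      intro h
      have hinv : v2⁻¹ = s := by
        linear_combination (-1) * hx3def + h - hs - x1 * htwo
      have hveq : v2 = s⁻¹ := by rw [← hinv, inv_inv]
      apply hv00
      linear_combination hveq - hv2def
    -- three distinct roots, contradiction
    have hsub : ({x1, x2, x3} : Finset L) ⊆
        Finset.univ.filter fun x : L => x ^ (q + 1) + x + b = 0 := by
      intro y hy
      simp only [Finset.mem_insert, Finset.mem_singleton] at hy
      rcases hy with rfl | rfl | rfl
      · exact Finset.mem_filter.mpr ⟨Finset.mem_univ _, hx1m.2⟩
      · exact Finset.mem_filter.mpr ⟨Finset.mem_univ _, hx2m.2⟩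
      · exact Finset.mem_filter.mpr ⟨Finset.mem_univ _, hx3⟩
    have hcard3 : ({x1, x2, x3} : Finset L).card = 3 := by
      rw [Finset.card_insert_of_notMem (by simp [hne, hx3ne1.symm, Ne.symm]),
        Finset.card_insert_of_notMem (by simp [hx3ne2.symm, Ne.symm]),
        Finset.card_singleton]
    have := Finset.card_le_card hsub
    rw [hcard3, hcard2] at this
    omega
  · -- b = 0 → card = 2
    intro hb
    subst hb
    have hset : (Finset.univ.filter fun x : L => x ^ (q + 1) + x + 0 = 0) = {0, 1} := by
      ext x
      simp only [Finset.mem_filter, Finset.mem_univ, true_and, Finset.mem_insert,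
        Finset.mem_singleton, add_zero]
      constructor
      · intro h
        rcases eq_or_ne x 0 with h0 | h0
        · exact Or.inl h0
        · right
          rw [pow_succ] at h
          have hxq : x ^ q * x = x := by linear_combination h - x * htwo
          have hxq1 : x ^ q = 1 := mul_right_cancel₀ h0 (by rw [hxq, one_mul])
          have hz : (x + 1) ^ q = 0 := by
            rw [hfrob, hxq1, one_pow]; linear_combination htwo
          have := pow_eq_zero_iff hqne |>.mp hz
          linear_combination this - htwo
      · rintro (rfl | rfl)
        · simp [zero_pow (show q + 1 ≠ 0 by omega)]
        · simp only [one_pow, add_zero]; linear_combination htwo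
    rw [hset, Finset.card_insert_of_notMem (by simp), Finset.card_singleton]
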